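/- Let G = (ℝ³ × SO(3)) ⋉ ℝ³ with product (z₁,Q₁,x₁)·(z₂,Q₂,x₂) = (z₁+z₂, Q₁Q₂, x₁ + Q₁x₂ + (I−Q₁)z₂), and define φ : G × (SO(3) × ℝ³) → SO(3) × ℝ³ by φ((z,Q,x), (R,v)) := (RQ, v + Rx + (I−R)z). Then φ is a right group action: φ(g₂, φ(g₁, ξ)) = φ(g₁·g₂, ξ) and φ(identity, ξ) = ξ. -/
import Mathlib

/-!
STATEMENT 18: For G = (ℝ³ × SO(3)) ⋉ ℝ³ with product
(z₁,Q₁,x₁)·(z₂,Q₂,x₂) = (z₁+z₂, Q₁Q₂, x₁+Q₁x₂+(I−Q₁)z₂), the map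
φ((z,Q,x), (R,v)) = (RQ, v + Rx + (I−R)z) is a right group action of G on
SO(3) × ℝ³: φ(g₂, φ(g₁, ξ)) = φ(g₁·g₂, ξ) and φ(identity, ξ) = ξ.
-/

open Matrix

/-- The SO(3) predicate: Q is a rotation matrix. -/
def IsSO3 (Q : Matrix (Fin 3) (Fin 3) ℝ) : Prop := Qᵀ * Q = 1 ∧ Q.det = 1

/-- Elements of G = (ℝ³ × SO(3)) ⋉ ℝ³ as triples (z, Q, x). -/
abbrev VAAGroupElt := (Fin 3 → ℝ) × Matrix (Fin 3) (Fin 3) ℝ × (Fin 3 → ℝ)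

/-- The product on G. -/
def vaaMul (g₁ g₂ : VAAGroupElt) : VAAGroupElt :=
  (g₁.1 + g₂.1, g₁.2.1 * g₂.2.1,
   g₁.2.2 + g₁.2.1 *ᵥ g₂.2.2 + (1 - g₁.2.1) *ᵥ g₂.1)

/-- The identity of G. -/
def vaaOne : VAAGroupElt := (0, 1, 0)

/-- The state space SO(3) × ℝ³ of orientation and velocity. -/
abbrev VAAState := Matrix (Fin 3) (Fin 3) ℝ × (Fin 3 → ℝ)

/-- The action φ((z,Q,x), (R,v)) = (RQ, v + Rx + (I−R)z) of G on SO(3) × ℝ³. -/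
def vaaAction (g : VAAGroupElt) (ξ : VAAState) : VAAState :=
  (ξ.1 * g.2.1, ξ.2 + ξ.1 *ᵥ g.2.2 + (1 - ξ.1) *ᵥ g.1)

theorem vaa_right_action
    (g₁ g₂ : VAAGroupElt) (ξ : VAAState)
    (hg₁ : IsSO3 g₁.2.1) (hg₂ : IsSO3 g₂.2.1) (hξ : IsSO3 ξ.1) :
    vaaAction g₂ (vaaAction g₁ ξ) = vaaAction (vaaMul g₁ g₂) ξ ∧
    vaaAction vaaOne ξ = ξ := by
  constructor
  · simp only [vaaAction, vaaMul, Prod.mk.injEq]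
    constructor
    · rw [Matrix.mul_assoc]
    · simp only [Matrix.add_mulVec, Matrix.sub_mulVec, Matrix.one_mulVec,
        Matrix.mulVec_add, Matrix.mulVec_sub, Matrix.mulVec_one,
        Matrix.mulVec_mulVec, Matrix.mul_one]
      abel
  · simp [vaaAction, vaaOne]
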